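/- Let D=(V∪R,A) be a digraph in which every vertex r∈R has in-degree 0. Then there exists a set of pairwise arc-disjoint arborescences {B_r}_{r∈R}, where each B_r is rooted at r and spans V∪{r}, if and only if for every X⊆V∪R with X∩V≠∅ we have d_A^-(X) ≥ |R−X|, where d_A^-(X) is the number of arcs entering X. -/

import Mathlib

open Set

/-- One step along an arc of `B` in the digraph given by tail/head maps. -/
def stepOn {α β : Type} (tl hd : β → α) (B : Set β) (u v : α) : Prop :=
  ∃ a ∈ B, tl a = u ∧ hd a = v

/-- Reachability using only arcs of `B`. -/
def reachOn {α β : Type} (tl hd : β → α) (B : Set β) (u v : α) : Prop :=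
  Relation.ReflTransGen (stepOn tl hd B) u v

/-- The vertex set of the arc set `B` together with the root `r`. -/
def vertsOf {α β : Type} (tl hd : β → α) (B : Set β) (r : α) : Set α :=
  insert r (tl '' B ∪ hd '' B)

/-- `B` is an `r`-arborescence: no arc enters the root, every other vertex of `B`
has exactly one entering arc, and every vertex of `B` is reachable from `r` in `B`. -/
noncomputable def IsArbor {α β : Type} (tl hd : β → α) (B : Set β) (r : α) : Prop :=
  (∀ a ∈ B, hd a ≠ r) ∧
  (∀ v ∈ vertsOf tl hd B r, v ≠ r → {a ∈ B | hd a = v}.ncard = 1) ∧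
  (∀ v ∈ vertsOf tl hd B r, reachOn tl hd B r v)

/-- Number of arcs entering the vertex set `X`. -/
noncomputable def dIn {α β : Type} (tl hd : β → α) (X : Set α) : ℕ :=
  {a : β | hd a ∈ X ∧ tl a ∉ X}.ncard

namespace EdmondsAux

variable {α β : Type}

noncomputable def dInOn (tl hd : β → α) (A : Set β) (X : Set α) : ℕ :=
  {a ∈ A | hd a ∈ X ∧ tl a ∉ X}.ncard

lemma reachOn_mono {tl hd : β → α} {B B' : Set β} (h : B ⊆ B') {u v : α}
    (hr : reachOn tl hd B u v) : reachOn tl hd B' u v :=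
  Relation.ReflTransGen.mono (r := stepOn tl hd B) (p := stepOn tl hd B')
    (fun _ _ ⟨a, haB, h1, h2⟩ => ⟨a, h haB, h1, h2⟩) _ _ hr

lemma exists_crossing {tl hd : β → α} {B : Set β} {X : Set α} {u v : α}
    (hr : reachOn tl hd B u v) : u ∉ X → v ∈ X → ∃ a ∈ B, hd a ∈ X ∧ tl a ∉ X := by
  induction hr with
  | refl => intro hu hv; exact absurd hv hu
  | @tail w x _ hs ih =>
    intro hu hv
    by_cases hwX : w ∈ X
    · exact ih hu hwX
    · obtain ⟨a, haB, h1, h2⟩ := hs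
      exact ⟨a, haB, h2 ▸ hv, h1 ▸ hwX⟩

lemma dInOn_submodular [Fintype β] (tl hd : β → α) (A : Set β) (X Y : Set α) :
    dInOn tl hd A (X ∪ Y) + dInOn tl hd A (X ∩ Y) ≤ dInOn tl hd A X + dInOn tl hd A Y := by
  classical
  set E : Set α → Set β := fun Z => {a ∈ A | hd a ∈ Z ∧ tl a ∉ Z} with hE
  have h1 : E (X ∪ Y) ∪ E (X ∩ Y) ⊆ E X ∪ E Y := by
    rintro a (⟨haA, hh, ht⟩ | ⟨haA, hh, ht⟩)
    · rcases hh with hh | hh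
      · exact Or.inl ⟨haA, hh, fun hx => ht (Or.inl hx)⟩
      · exact Or.inr ⟨haA, hh, fun hx => ht (Or.inr hx)⟩
    · by_cases htX : tl a ∈ X
      · exact Or.inr ⟨haA, hh.2, fun hy => ht ⟨htX, hy⟩⟩
      · exact Or.inl ⟨haA, hh.1, htX⟩
  have h2 : E (X ∪ Y) ∩ E (X ∩ Y) ⊆ E X ∩ E Y := by
    rintro a ⟨⟨haA, _, ht⟩, ⟨_, hh, _⟩⟩
    exact ⟨⟨haA, hh.1, fun hx => ht (Or.inl hx)⟩, ⟨haA, hh.2, fun hy => ht (Or.inr hy)⟩⟩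
  have key : (E (X ∪ Y)).ncard + (E (X ∩ Y)).ncard ≤ (E X).ncard + (E Y).ncard := by
    rw [← Set.ncard_union_add_ncard_inter _ _ (toFinite _) (toFinite _),
        ← Set.ncard_union_add_ncard_inter (E X) (E Y) (toFinite _) (toFinite _)]
    exact add_le_add (Set.ncard_le_ncard h1 (toFinite _)) (Set.ncard_le_ncard h2 (toFinite _))
  exact key

lemma ncard_diff_modular [Fintype α] (Q X Y : Set α) :
    (Q \ (X ∪ Y)).ncard + (Q \ (X ∩ Y)).ncard = (Q \ X).ncard + (Q \ Y).ncard := by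
  have h1 : Q \ (X ∪ Y) = (Q \ X) ∩ (Q \ Y) := by ext x; simp [mem_diff]; tauto
  have h2 : Q \ (X ∩ Y) = (Q \ X) ∪ (Q \ Y) := by ext x; simp [mem_diff]; tauto
  rw [h1, h2, add_comm]
  exact Set.ncard_union_add_ncard_inter _ _ (toFinite _) (toFinite _)

open Classical in
noncomputable def indic (X S : Set α) : ℕ := if (X ∩ S) = ∅ then 1 else 0
lemma indic_eq_zero {X S : Set α} (h : (X ∩ S).Nonempty) : indic X S = 0 := by
  unfold indic; rw [if_neg h.ne_empty]
lemma indic_eq_one {X S : Set α} (h : X ∩ S = ∅) : indic X S = 1 := by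
  unfold indic; rw [if_pos h]
lemma indic_le_one (X S : Set α) : indic X S ≤ 1 := by
  unfold indic; split <;> omega
lemma grow [Fintype α] [Fintype β] (V R : Set α) (tl hd : β → α)
    (hpart : V ∪ R = Set.univ) (hdisj : Disjoint V R)
    (hroot : ∀ a : β, hd a ∉ R)
    (A : Set β) (r : α) (hr : r ∈ R) (Q : Set α) :
    ∀ n (F : Set β), F ⊆ A → IsArbor tl hd F r →
      vertsOf tl hd F r ⊆ V ∪ {r} →
      ((V ∪ {r}) \ vertsOf tl hd F r).ncard = n →
      (∀ X : Set α, (X ∩ V).Nonempty →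
        dInOn tl hd (A \ F) X ≥ (Q \ X).ncard + indic X (vertsOf tl hd F r)) →
      ∃ F' : Set β, F ⊆ F' ∧ F' ⊆ A ∧ IsArbor tl hd F' r ∧
        vertsOf tl hd F' r = V ∪ {r} ∧
        (∀ X : Set α, (X ∩ V).Nonempty → dInOn tl hd (A \ F') X ≥ (Q \ X).ncard) := by
  classical
  intro n
  induction n with
  | zero =>
    intro F hFA harb hsub hcard hinv
    have h0 : ((V ∪ {r}) \ vertsOf tl hd F r) = ∅ := (Set.ncard_eq_zero (toFinite _)).1 hcard
    have hS : vertsOf tl hd F r = V ∪ {r} := by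
      refine Subset.antisymm hsub fun x hx => ?_
      by_contra hxS
      exact (h0 ▸ (⟨hx, hxS⟩ : x ∈ (V ∪ {r}) \ vertsOf tl hd F r) : x ∈ (∅ : Set α))
    refine ⟨F, Subset.rfl, hFA, harb, hS, fun X hX => ?_⟩
    have hne : (X ∩ vertsOf tl hd F r).Nonempty := by
      rw [hS]
      obtain ⟨v, hvX, hvV⟩ := hX
      exact ⟨v, hvX, Or.inl hvV⟩
    have := hinv X hX
    rw [indic_eq_zero hne] at this
    omega
  | succ n ih =>
    intro F hFA harb hsub hcard hinv
    set S := vertsOf tl hd F r with hSdef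
    have hrS : r ∈ S := mem_insert _ _
    have htlsubS : ∀ x ∈ F, tl x ∈ S := fun x hx => Or.inr (Or.inl ⟨x, hx, rfl⟩)
    have hhdsubS : ∀ x ∈ F, hd x ∈ S := fun x hx => Or.inr (Or.inr ⟨x, hx, rfl⟩)
    have hmiss : ((V ∪ {r}) \ S).Nonempty := by
      rw [← Set.ncard_pos (toFinite _), hcard]; omega
    obtain ⟨v₀, hv₀VR, hv₀S⟩ := hmiss
    have hv₀V : v₀ ∈ V := by
      rcases hv₀VR with h | h
      · exact h
      · exact absurd (h ▸ hrS) hv₀S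
    have hdV : ∀ x : β, hd x ∈ V := by
      intro x
      have : hd x ∈ V ∪ R := hpart ▸ mem_univ (hd x)
      rcases this with h | h
      · exact h
      · exact absurd h (hroot x)
    -- key claim: a good arc exists
    have key : ∃ a, a ∈ A ∧ a ∉ F ∧ tl a ∈ S ∧ hd a ∈ V ∧ hd a ∉ S ∧
        (∀ Y : Set α, (Y ∩ V).Nonempty → (Y ∩ S).Nonempty →
           dInOn tl hd (A \ F) Y = (Q \ Y).ncard → hd a ∈ Y → tl a ∈ Y) := by
      by_cases hcrit : ∃ Y : Set α, ((Y ∩ V).Nonempty ∧ (Y ∩ S).Nonempty ∧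
          dInOn tl hd (A \ F) Y = (Q \ Y).ncard) ∧ ((Y \ S) ∩ V).Nonempty
      · -- take a minimal-cardinality critical set X
        set Crit : Set α → Prop := fun Y => ((Y ∩ V).Nonempty ∧ (Y ∩ S).Nonempty ∧
          dInOn tl hd (A \ F) Y = (Q \ Y).ncard) ∧ ((Y \ S) ∩ V).Nonempty with hCrit
        have hns : {m : ℕ | ∃ Y, Crit Y ∧ Y.ncard = m}.Nonempty :=
          ⟨hcrit.choose.ncard, hcrit.choose, hcrit.choose_spec, rfl⟩
        obtain ⟨X, hXc, hXn⟩ := Nat.sInf_mem hns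
        have hXmin : ∀ Y, Crit Y → X.ncard ≤ Y.ncard := by
          intro Y hY
          rw [hXn]
          exact Nat.sInf_le ⟨Y, hY, rfl⟩
        obtain ⟨⟨hXV, hXS, hXd⟩, hXVS⟩ := hXc
        -- invariant applied to X \ S
        have h1 : dInOn tl hd (A \ F) (X \ S) ≥ (Q \ (X \ S)).ncard + 1 := by
          have hind : (X \ S) ∩ S = ∅ := by ext x; simp [mem_diff]
          have := hinv (X \ S) hXVS
          rwa [indic_eq_one hind] at this
        set E1 := {x ∈ A \ F | hd x ∈ X \ S ∧ tl x ∉ X \ S} with hE1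
        set E2 := {x ∈ A \ F | hd x ∈ X ∧ tl x ∉ X} with hE2
        set E3 := {x ∈ A \ F | hd x ∈ X \ S ∧ tl x ∈ X ∩ S} with hE3
        have hsubE : E1 ⊆ E2 ∪ E3 := by
          rintro x ⟨hx, hh, ht⟩
          by_cases htX : tl x ∈ X
          · by_cases htS : tl x ∈ S
            · exact Or.inr ⟨hx, hh, htX, htS⟩
            · exact absurd ⟨htX, htS⟩ ht
          · exact Or.inl ⟨hx, hh.1, htX⟩
        have hcE1 : E1.ncard ≤ E2.ncard + E3.ncard :=
          le_trans (Set.ncard_le_ncard hsubE (toFinite _)) (Set.ncard_union_le _ _)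
        have hw : (Q \ X).ncard ≤ (Q \ (X \ S)).ncard :=
          Set.ncard_le_ncard (diff_subset_diff_right diff_subset) (toFinite _)
        have hE2card : E2.ncard = (Q \ X).ncard := hXd
        have hE1card : E1.ncard ≥ (Q \ (X \ S)).ncard + 1 := h1
        have hE3ne : E3.Nonempty := by
          rw [← Set.ncard_pos (toFinite _)]
          omega
        obtain ⟨a, haAF, hhd, htl⟩ := hE3ne
        refine ⟨a, haAF.1, haAF.2, htl.2, hdV a, hhd.2, ?_⟩
        -- goodness
        intro Y hYV hYS hYd hhdY
        by_contra htlY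
        have hsubmod := dInOn_submodular tl hd (A \ F) X Y
        have hXuY : dInOn tl hd (A \ F) (X ∪ Y) ≥ (Q \ (X ∪ Y)).ncard := by
          have h := hinv (X ∪ Y) (hXV.mono (inter_subset_inter_left _ subset_union_left))
          omega
        have hXiYV : ((X ∩ Y) ∩ V).Nonempty := ⟨hd a, ⟨hhd.1, hhdY⟩, hdV a⟩
        have hXiY := hinv (X ∩ Y) hXiYV
        have hmod := ncard_diff_modular Q X Y
        -- derive tightness of X ∩ Y and that it meets S
        have hiS : ((X ∩ Y) ∩ S).Nonempty := by
          by_contra hc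
          rw [not_nonempty_iff_eq_empty] at hc
          rw [indic_eq_one hc] at hXiY
          omega
        rw [indic_eq_zero hiS] at hXiY
        have htight : dInOn tl hd (A \ F) (X ∩ Y) = (Q \ (X ∩ Y)).ncard := by omega
        have hcritXY : Crit (X ∩ Y) :=
          ⟨⟨hXiYV, hiS, htight⟩, ⟨hd a, ⟨⟨hhd.1, hhdY⟩, hhd.2⟩, hdV a⟩⟩
        have hss : X ∩ Y ⊂ X := by
          refine ⟨inter_subset_left, fun hXsub => ?_⟩
          have : tl a ∈ X ∩ Y := hXsub htl.1
          exact htlY this.2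
        have hlt := Set.ncard_lt_ncard hss (toFinite _)
        have := hXmin (X ∩ Y) hcritXY
        omega
      · -- no critical set: any arc entering univ \ S works
        have hZV : ((univ \ S) ∩ V).Nonempty := ⟨v₀, ⟨trivial, hv₀S⟩, hv₀V⟩
        have hZ := hinv (univ \ S) hZV
        have hind : (univ \ S) ∩ S = ∅ := by ext x; simp
        rw [indic_eq_one hind] at hZ
        have hpos : 0 < dInOn tl hd (A \ F) (univ \ S) := by omega
        rw [dInOn, Set.ncard_pos (toFinite _)] at hpos
        obtain ⟨a, haAF, hhda, htla⟩ := hpos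
        have htlaS : tl a ∈ S := by
          by_contra hc
          exact htla ⟨trivial, hc⟩
        refine ⟨a, haAF.1, haAF.2, htlaS, hdV a, hhda.2, ?_⟩
        intro Y hYV hYS hYd hhdY
        by_contra htlY
        exact hcrit ⟨Y, ⟨hYV, hYS, hYd⟩, ⟨hd a, ⟨⟨hhdY, hhda.2⟩, hdV a⟩⟩⟩
    obtain ⟨a, haA, haF, htlS, hhdV, hhdS, hgood⟩ := key
    set F' := insert a F with hF'def
    have hSF' : vertsOf tl hd F' r = insert (hd a) S := by
      rw [hSdef]
      unfold vertsOf
      rw [hF'def, image_insert_eq, image_insert_eq]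
      ext x
      simp only [mem_insert_iff, mem_union]
      constructor
      · rintro (rfl | (rfl | h) | (rfl | h))
        · exact Or.inr (Or.inl rfl)
        · rcases htlS with h | h
          · exact Or.inr (Or.inl h)
          · exact Or.inr (Or.inr h)
        · exact Or.inr (Or.inr (Or.inl h))
        · exact Or.inl rfl
        · exact Or.inr (Or.inr (Or.inr h))
      · rintro (rfl | (rfl | (h | h)))
        · exact Or.inr (Or.inr (Or.inl rfl))
        · exact Or.inl rfl
        · exact Or.inr (Or.inl (Or.inr h))
        · exact Or.inr (Or.inr (Or.inr h))
    have hF'A : F' ⊆ A := insert_subset haA hFA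
    obtain ⟨harb1, harb2, harb3⟩ := harb
    have hhdne : ∀ x ∈ F, hd x ≠ hd a := fun x hx h => hhdS (h ▸ hhdsubS x hx)
    have harb' : IsArbor tl hd F' r := by
      refine ⟨?_, ?_, ?_⟩
      · rintro x (rfl | hx)
        · exact fun h => (disjoint_left.mp hdisj (h ▸ hhdV)) hr
        · exact harb1 x hx
      · intro v hv hvr
        rw [hSF'] at hv
        rcases hv with rfl | hvS
        · have : {x ∈ F' | hd x = hd a} = {a} := by
            ext x
            simp only [mem_setOf_eq, mem_singleton_iff, hF'def, mem_insert_iff]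
            constructor
            · rintro ⟨rfl | hx, hh⟩
              · rfl
              · exact absurd hh (hhdne x hx)
            · rintro rfl
              exact ⟨Or.inl rfl, rfl⟩
          rw [this, Set.ncard_singleton]
        · have hvne : v ≠ hd a := fun h => hhdS (h ▸ hvS)
          have : {x ∈ F' | hd x = v} = {x ∈ F | hd x = v} := by
            ext x
            simp only [mem_setOf_eq, hF'def, mem_insert_iff]
            constructor
            · rintro ⟨rfl | hx, hh⟩
              · exact absurd hh.symm hvne
              · exact ⟨hx, hh⟩
            · rintro ⟨hx, hh⟩
              exact ⟨Or.inr hx, hh⟩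
          rw [this]
          exact harb2 v hvS hvr
      · intro v hv
        rw [hSF'] at hv
        rcases hv with rfl | hvS
        · exact (reachOn_mono (subset_insert a F) (harb3 (tl a) htlS)).tail
            ⟨a, mem_insert a F, rfl, rfl⟩
        · exact reachOn_mono (subset_insert a F) (harb3 v hvS)
    have hsub' : vertsOf tl hd F' r ⊆ V ∪ {r} := by
      rw [hSF']
      exact insert_subset (Or.inl hhdV) hsub
    have hcard' : ((V ∪ {r}) \ vertsOf tl hd F' r).ncard = n := by
      rw [hSF']
      have hdiff : (V ∪ {r}) \ insert (hd a) S = ((V ∪ {r}) \ S) \ {hd a} := by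
        ext x; simp only [mem_diff, mem_insert_iff, mem_singleton_iff]; tauto
      rw [hdiff]
      have hmem : hd a ∈ (V ∪ {r}) \ S := ⟨Or.inl hhdV, hhdS⟩
      have := Set.ncard_diff_singleton_add_one hmem (toFinite _)
      omega
    have hinv' : ∀ X : Set α, (X ∩ V).Nonempty →
        dInOn tl hd (A \ F') X ≥ (Q \ X).ncard + indic X (vertsOf tl hd F' r) := by
      intro X hXV
      have hbase := hinv X hXV
      set E := {x ∈ A \ F | hd x ∈ X ∧ tl x ∉ X} with hEdef
      have hE' : {x ∈ A \ F' | hd x ∈ X ∧ tl x ∉ X} = E \ {a} := by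
        ext x
        simp only [hEdef, mem_setOf_eq, mem_diff, mem_singleton_iff, hF'def, mem_insert_iff]
        tauto
      have hgoal : dInOn tl hd (A \ F') X = (E \ {a}).ncard := by rw [dInOn, hE']
      by_cases henter : hd a ∈ X ∧ tl a ∉ X
      · have haE : a ∈ E := ⟨⟨haA, haF⟩, henter⟩
        have hc : (E \ {a}).ncard + 1 = E.ncard := Set.ncard_diff_singleton_add_one haE (toFinite _)
        have hindic' : indic X (vertsOf tl hd F' r) = 0 := by
          apply indic_eq_zero
          rw [hSF']
          exact ⟨hd a, henter.1, mem_insert _ _⟩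
        rw [hgoal, hindic']
        by_cases hXS : (X ∩ S).Nonempty
        · -- if tight, contradiction with goodness; else slack
          by_cases htight : dInOn tl hd (A \ F) X = (Q \ X).ncard
          · exact absurd (hgood X hXV hXS htight henter.1) henter.2
          · rw [indic_eq_zero hXS] at hbase
            have : dInOn tl hd (A \ F) X = E.ncard := rfl
            omega
        · rw [not_nonempty_iff_eq_empty] at hXS
          rw [indic_eq_one hXS] at hbase
          have : dInOn tl hd (A \ F) X = E.ncard := rfl
          omega
      · have haE : a ∉ E := fun h => henter h.2
        have hEq : E \ {a} = E := by
          ext x; simp only [mem_diff, mem_singleton_iff]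
          exact ⟨fun h => h.1, fun h => ⟨h, fun hx => haE (hx ▸ h)⟩⟩
        rw [hgoal, hEq]
        have hle : indic X (vertsOf tl hd F' r) ≤ indic X S := by
          by_cases hXS : (X ∩ S).Nonempty
          · have : (X ∩ vertsOf tl hd F' r).Nonempty := by
              rw [hSF']
              exact hXS.mono (inter_subset_inter_right _ (subset_insert _ _))
            rw [indic_eq_zero this, indic_eq_zero hXS]
          · exact le_trans (indic_le_one _ _) (by
              rw [not_nonempty_iff_eq_empty] at hXS
              rw [indic_eq_one hXS])
        have : dInOn tl hd (A \ F) X = E.ncard := rfl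
        omega
    obtain ⟨F'', h1, h2, h3, h4, h5⟩ := ih F' hF'A harb' hsub' hcard' hinv'
    exact ⟨F'', subset_trans (subset_insert a F) h1, h2, h3, h4, h5⟩

lemma outer [Fintype α] [Fintype β] (V R : Set α) (tl hd : β → α)
    (hpart : V ∪ R = Set.univ) (hdisj : Disjoint V R)
    (hroot : ∀ a : β, hd a ∉ R) :
    ∀ n (A : Set β) (R' : Set α), R' ⊆ R → R'.ncard = n →
      (∀ X : Set α, (X ∩ V).Nonempty → dInOn tl hd A X ≥ (R' \ X).ncard) →
      ∃ B : α → Set β,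
        (∀ r ∈ R', ∀ r' ∈ R', r ≠ r' → Disjoint (B r) (B r')) ∧
        (∀ r ∈ R', B r ⊆ A ∧ IsArbor tl hd (B r) r ∧ vertsOf tl hd (B r) r = V ∪ {r}) := by
  classical
  intro n
  induction n with
  | zero =>
    intro A R' hsub hc _
    have hR' : R' = ∅ := (Set.ncard_eq_zero (toFinite _)).1 hc
    exact ⟨fun _ => ∅, by simp [hR'], by simp [hR']⟩
  | succ n ih =>
    intro A R' hsub hc hinv
    have hne : R'.Nonempty := by
      rw [← Set.ncard_pos (toFinite _), hc]; omega
    obtain ⟨r, hrR'⟩ := hne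
    have hverts0 : vertsOf tl hd (∅ : Set β) r = {r} := by simp [vertsOf]
    have harb0 : IsArbor tl hd (∅ : Set β) r := by
      refine ⟨fun a ha => absurd ha (notMem_empty a), ?_, ?_⟩
      · intro v hv hvr
        rw [hverts0] at hv
        exact absurd hv hvr
      · intro v hv
        rw [hverts0, mem_singleton_iff] at hv
        rw [hv]
        exact Relation.ReflTransGen.refl
    have hinv0 : ∀ X : Set α, (X ∩ V).Nonempty →
        dInOn tl hd (A \ ∅) X ≥ ((R' \ {r}) \ X).ncard + indic X (vertsOf tl hd (∅ : Set β) r) := by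
      intro X hX
      have hb := hinv X hX
      rw [diff_empty, hverts0]
      by_cases hrX : r ∈ X
      · have heq : (R' \ {r}) \ X = R' \ X := by
          ext x
          simp only [mem_diff, mem_singleton_iff]
          constructor
          · rintro ⟨⟨h1, _⟩, h2⟩; exact ⟨h1, h2⟩
          · rintro ⟨h1, h2⟩; exact ⟨⟨h1, fun h => h2 (h ▸ hrX)⟩, h2⟩
        rw [heq, indic_eq_zero (show (X ∩ ({r} : Set α)).Nonempty from ⟨r, hrX, rfl⟩)]
        omega
      · have hXr : X ∩ {r} = ∅ := by
          ext x; simp only [mem_inter_iff, mem_singleton_iff, mem_empty_iff_false, iff_false]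
          rintro ⟨hx, rfl⟩; exact hrX hx
        have heq : R' \ X = insert r ((R' \ {r}) \ X) := by
          ext x
          simp only [mem_diff, mem_singleton_iff, mem_insert_iff]
          constructor
          · rintro ⟨h1, h2⟩
            by_cases hx : x = r
            · exact Or.inl hx
            · exact Or.inr ⟨⟨h1, hx⟩, h2⟩
          · rintro (rfl | ⟨⟨h1, _⟩, h2⟩)
            · exact ⟨hrR', hrX⟩
            · exact ⟨h1, h2⟩
        have hnm : r ∉ (R' \ {r}) \ X := by
          rintro ⟨⟨_, h⟩, _⟩; exact h rfl
        rw [indic_eq_one hXr]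
        rw [heq, Set.ncard_insert_of_notMem hnm (toFinite _)] at hb
        omega
    obtain ⟨F', _, hF'A, hF'arb, hF'verts, hF'inv⟩ :=
      grow V R tl hd hpart hdisj hroot A r (hsub hrR') (R' \ {r})
        ((V ∪ {r}) \ vertsOf tl hd (∅ : Set β) r).ncard ∅ (empty_subset A) harb0
        (by rw [hverts0]; exact singleton_subset_iff.2 (Or.inr rfl)) rfl hinv0
    have hc' : (R' \ {r}).ncard = n := by
      have := Set.ncard_diff_singleton_add_one hrR' (toFinite _)
      omega
    obtain ⟨B₀, hdisj₀, hmem₀⟩ := ih (A \ F') (R' \ {r})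
      (subset_trans diff_subset hsub) hc' hF'inv
    refine ⟨fun x => if x = r then F' else B₀ x, ?_, ?_⟩
    · intro r₁ h₁ r₂ h₂ hne12
      by_cases e₁ : r₁ = r <;> by_cases e₂ : r₂ = r
      · exact absurd (e₁.trans e₂.symm) hne12
      · simp only [if_pos e₁, if_neg e₂]
        exact Set.disjoint_of_subset_right (hmem₀ r₂ ⟨h₂, e₂⟩).1 disjoint_sdiff_right
      · simp only [if_neg e₁, if_pos e₂]
        exact Set.disjoint_of_subset_left (hmem₀ r₁ ⟨h₁, e₁⟩).1 disjoint_sdiff_left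
      · simp only [if_neg e₁, if_neg e₂]
        exact hdisj₀ r₁ ⟨h₁, e₁⟩ r₂ ⟨h₂, e₂⟩ hne12
    · intro r₁ h₁
      by_cases e : r₁ = r
      · subst e
        simp only [if_pos rfl]
        exact ⟨hF'A, hF'arb, hF'verts⟩
      · simp only [if_neg e]
        obtain ⟨hsub₁, harb₁, hverts₁⟩ := hmem₀ r₁ ⟨h₁, e⟩
        exact ⟨subset_trans hsub₁ diff_subset, harb₁, hverts₁⟩

theorem edmonds' {α β : Type} [Fintype α] [Fintype β]
    (V R : Set α) (tl hd : β → α)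
    (hpart : V ∪ R = Set.univ) (hdisj : Disjoint V R)
    (hroot : ∀ a : β, hd a ∉ R) :
    (∃ B : α → Set β,
      (∀ r ∈ R, ∀ r' ∈ R, r ≠ r' → Disjoint (B r) (B r')) ∧
      (∀ r ∈ R, IsArbor tl hd (B r) r ∧ vertsOf tl hd (B r) r = V ∪ {r}))
    ↔ (∀ X : Set α, (X ∩ V).Nonempty → dIn tl hd X ≥ (R \ X).ncard) := by
  classical
  constructor
  · rintro ⟨B, hBd, hBa⟩ X hX
    obtain ⟨v, hvX, hvV⟩ := hX
    have hcross : ∀ r ∈ R \ X, ∃ a, a ∈ B r ∧ hd a ∈ X ∧ tl a ∉ X := by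
      rintro r ⟨hrR, hrX⟩
      obtain ⟨harb, hverts⟩ := hBa r hrR
      have hreach : reachOn tl hd (B r) r v :=
        harb.2.2 v (by rw [hverts]; exact Or.inl hvV)
      obtain ⟨a, ha, h1, h2⟩ := exists_crossing hreach hrX hvX
      exact ⟨a, ha, h1, h2⟩
    by_cases h0 : (R \ X).Nonempty
    · obtain ⟨r₀, hr₀⟩ := h0
      have : Nonempty β := ⟨(hcross r₀ hr₀).choose⟩
      set f : α → β := fun r =>
        if h : ∃ a, a ∈ B r ∧ hd a ∈ X ∧ tl a ∉ X then h.choose else Classical.arbitrary β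
        with hfdef
      apply Set.ncard_le_ncard_of_injOn f
      · intro r hrd
        have hex := hcross r hrd
        simp only [hfdef, dif_pos hex]
        exact ⟨hex.choose_spec.2.1, hex.choose_spec.2.2⟩
      · intro r₁ h₁ r₂ h₂ heq
        by_contra hne
        have hex₁ := hcross r₁ h₁
        have hex₂ := hcross r₂ h₂
        have hf₁ : f r₁ ∈ B r₁ := by
          simp only [hfdef, dif_pos hex₁]; exact hex₁.choose_spec.1
        have hf₂ : f r₂ ∈ B r₂ := by
          simp only [hfdef, dif_pos hex₂]; exact hex₂.choose_spec.1
        exact (disjoint_left.mp (hBd r₁ h₁.1 r₂ h₂.1 hne) hf₁) (heq ▸ hf₂)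
    · rw [not_nonempty_iff_eq_empty] at h0
      simp [h0]
  · intro hcut
    have hconv : ∀ X : Set α, (X ∩ V).Nonempty → dInOn tl hd univ X ≥ (R \ X).ncard := by
      intro X hX
      have : dInOn tl hd univ X = dIn tl hd X := by
        unfold dInOn dIn
        congr 1
        ext a; simp
      rw [this]
      exact hcut X hX
    obtain ⟨B, h1, h2⟩ := outer V R tl hd hpart hdisj hroot R.ncard univ R Subset.rfl rfl hconv
    exact ⟨B, h1, fun r hr => ⟨(h2 r hr).2.1, (h2 r hr).2.2⟩⟩

end EdmondsAux

/-- Edmonds' theorem on packing spanning arborescences with prescribed roots. -/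
theorem edmonds_packing_spanning_arborescences
    {α β : Type} [Fintype α] [Fintype β]
    (V R : Set α) (tl hd : β → α)
    (hpart : V ∪ R = Set.univ) (hdisj : Disjoint V R)
    (hroot : ∀ a : β, hd a ∉ R) :
    (∃ B : α → Set β,
      (∀ r ∈ R, ∀ r' ∈ R, r ≠ r' → Disjoint (B r) (B r')) ∧
      (∀ r ∈ R, IsArbor tl hd (B r) r ∧ vertsOf tl hd (B r) r = V ∪ {r}))
    ↔ (∀ X : Set α, (X ∩ V).Nonempty → dIn tl hd X ≥ (R \ X).ncard) := by
  exact EdmondsAux.edmonds' V R tl hd hpart hdisj hroot
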